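/- There is no quadratic form Q on ℝ³ such that Q is positive definite, Q(v) ≥ 1 for every nonzero v ∈ ℤ³, and Q(2e₁ − e₂ − e₃) = Q(e₂) = Q(e₃) = 1. (Hence the Friedman–Smith monodromy cone for n = 3 is not contained in any cone of the perfect cone decomposition, nor of the central cone decomposition.) -/

import Mathlib

/-- There is no quadratic form `Q` on `ℝ³` that is positive definite, takes values `≥ 1` on
every nonzero integer vector, and takes the value `1` on the Friedman–Smith generators
`2e₁ − e₂ − e₃`, `e₂`, `e₃` for `n = 3`.  (Hence the Friedman–Smith monodromy cone for
`n = 3` is not contained in any cone of the perfect cone decomposition, nor of the central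
cone decomposition.) -/
theorem no_perfect_form_for_FS3 :
    ¬∃ Q : QuadraticForm ℝ (Fin 3 → ℝ),
      (∀ x : Fin 3 → ℝ, x ≠ 0 → 0 < Q x) ∧
      (∀ v : Fin 3 → ℤ, v ≠ 0 → 1 ≤ Q fun k => (v k : ℝ)) ∧
      Q ![2, -1, -1] = 1 ∧ Q ![0, 1, 0] = 1 ∧ Q ![0, 0, 1] = 1 := by
  rintro ⟨Q, -, h2, hfs, he2, he3⟩
  set B := QuadraticMap.associated (R := ℝ) Q with hB
  have hQ : ∀ x, Q x = B x x := fun x =>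
    (QuadraticMap.associated_eq_self_apply ℝ Q x).symm
  have hsymm : ∀ x y, B x y = B y x := fun x y =>
    QuadraticMap.associated_isSymm ℝ Q x y
  set a : Fin 3 → ℝ := ![1, 0, 0]
  set b : Fin 3 → ℝ := ![0, 1, 0]
  set c : Fin 3 → ℝ := ![0, 0, 1]
  -- integer vectors
  have key : ∀ v : Fin 3 → ℤ, v ≠ 0 → 1 ≤ Q fun k => (v k : ℝ) := h2
  have h1 : (1 : ℝ) ≤ Q a := by
    have := key ![1, 0, 0] (by decide)
    convert this using 2
    ext i; fin_cases i <;> simp [a]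
  have hab : (1 : ℝ) ≤ Q (a - b) := by
    have := key ![1, -1, 0] (by decide)
    convert this using 2
    ext i; fin_cases i <;> simp [a, b]
  have hac : (1 : ℝ) ≤ Q (a - c) := by
    have := key ![1, 0, -1] (by decide)
    convert this using 2
    ext i; fin_cases i <;> simp [a, c]
  have habc : (1 : ℝ) ≤ Q (a - b - c) := by
    have := key ![1, -1, -1] (by decide)
    convert this using 2
    ext i; fin_cases i <;> simp [a, b, c]
  have hv : (![2, -1, -1] : Fin 3 → ℝ) = (2 : ℝ) • a - b - c := by
    ext i; fin_cases i <;> simp [a, b, c]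
  -- the key identity
  have hid : Q ((2 : ℝ) • a - b - c) + Q b + Q c
      = Q a + Q (a - b) + Q (a - c) + Q (a - b - c) := by
    simp only [hQ, map_sub, map_smul, LinearMap.sub_apply, LinearMap.smul_apply,
      smul_eq_mul]
    rw [hsymm b a, hsymm c a, hsymm c b]
    ring
  rw [hv] at hfs
  rw [hfs, he2, he3] at hid
  linarith
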